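/- Let M be a topological space and X a topological space of labels. Then the forgetful map C'(M × ℝ; X) → C(M × ℝ; X), (c, t) ↦ c, is a homotopy equivalence of topological spaces. (Asserted in Section 10 of the paper, following Segal: the configuration-space monoid C'(M × ℝ; X) is homotopy equivalent to the labelled configuration space C(M × ℝ; X).) -/

import Mathlib

open Set

/-- The relation identifying two ordered labelled configurations of cardinality `k` in `Y` with
labels in `X` when they differ by a permutation of the indices: the space of unordered labelled
configurations of cardinality `k` is the quotient `(C̃ₖ(Y) × Xᵏ)/Σₖ` by this relation, where
`C̃ₖ(Y) ⊆ Yᵏ` is the subspace of injective `k`-tuples. -/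
def ConfigRel (Y X : Type) (k : ℕ)
    (p q : { v : Fin k → Y // Function.Injective v } × (Fin k → X)) : Prop :=
  ∃ σ : Equiv.Perm (Fin k), (p.1 : Fin k → Y) ∘ σ = (q.1 : Fin k → Y) ∧ p.2 ∘ σ = q.2

/-- The labelled configuration space `C(Y; X)`: the disjoint union, over all `k ≥ 0`, of the
quotients `(C̃ₖ(Y) × Xᵏ)/Σₖ` of the spaces of injective `k`-tuples in `Y` labelled by `X` by the
diagonal action of the symmetric group `Σₖ`, with the quotient and disjoint-union topologies
(the subspace and product topologies on `C̃ₖ(Y) × Xᵏ ⊆ Yᵏ × Xᵏ`). -/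
def LabelledConfig (Y X : Type) [TopologicalSpace Y] [TopologicalSpace X] : Type :=
  Σ k : ℕ, Quot (ConfigRel Y X k)

instance (Y X : Type) [TopologicalSpace Y] [TopologicalSpace X] :
    TopologicalSpace (LabelledConfig Y X) :=
  instTopologicalSpaceSigma

/-- The space `C'(M × ℝ; X)`: the subspace of `C(M × ℝ; X) × [0, ∞)` of pairs `(c, t)` such
that every point of the underlying configuration of `c` has `ℝ`-coordinate in the open interval
`(0, t)`. -/
def CPrime (M X : Type) [TopologicalSpace M] [TopologicalSpace X] : Type :=
  { p : LabelledConfig (M × ℝ) X × ℝ //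
      0 ≤ p.2 ∧ ∀ q : { v : Fin p.1.1 → M × ℝ // Function.Injective v } × (Fin p.1.1 → X),
        Quot.mk (ConfigRel (M × ℝ) X p.1.1) q = p.1.2 →
          ∀ i, ((q.1 : Fin p.1.1 → M × ℝ) i).2 ∈ Set.Ioo (0 : ℝ) p.2 }

instance (M X : Type) [TopologicalSpace M] [TopologicalSpace X] :
    TopologicalSpace (CPrime M X) :=
  instTopologicalSpaceSubtype

namespace SegalAux

noncomputable def phi (x : ℝ) : ℝ := Real.arctan x / 4 + 1 / 2

lemma pi_lt_four : Real.pi < 4 := by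
  have := Real.pi_lt_d2; linarith

lemma phi_mem (x : ℝ) : phi x ∈ Set.Ioo (0 : ℝ) 1 := by
  have h1 := Real.arctan_lt_pi_div_two x
  have h2 := Real.neg_pi_div_two_lt_arctan x
  have h3 := pi_lt_four
  unfold phi
  constructor <;> [linarith; linarith]

lemma phi_strictMono : StrictMono phi := fun a b h => by
  have := Real.arctan_strictMono h
  unfold phi; linarith

lemma phi_continuous : Continuous phi :=
  (Real.continuous_arctan.div_const 4).add continuous_const

noncomputable def fh (s x : ℝ) : ℝ := (1 - s) * x + s * phi x

lemma fh_zero (x : ℝ) : fh 0 x = x := by simp [fh]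

lemma fh_one (x : ℝ) : fh 1 x = phi x := by simp [fh]

lemma fh_continuous : Continuous fun p : ℝ × ℝ => fh p.1 p.2 := by
  unfold fh
  have := phi_continuous
  fun_prop

lemma fh_strictMono {s : ℝ} (h0 : 0 ≤ s) (h1 : s ≤ 1) : StrictMono (fh s) := by
  intro a b hab
  have hp := phi_strictMono hab
  unfold fh
  rcases lt_or_eq_of_le h1 with hs | hs
  · nlinarith
  · subst hs; nlinarith

lemma fh_mem {s t x : ℝ} (h0 : 0 ≤ s) (h1 : s ≤ 1) (hx : x ∈ Set.Ioo 0 t) :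
    fh s x ∈ Set.Ioo (0 : ℝ) ((1 - s) * t + s) := by
  obtain ⟨hx0, hxt⟩ := hx
  obtain ⟨hp0, hp1⟩ := phi_mem x
  unfold fh
  constructor
  · rcases lt_or_eq_of_le h1 with hs | hs
    · nlinarith
    · subst hs; nlinarith
  · rcases lt_or_eq_of_le h0 with hs | hs
    · nlinarith
    · subst hs; nlinarith

variable {M X : Type} [TopologicalSpace M] [TopologicalSpace X]

/-- The family of self-embeddings of `M × ℝ` parametrized by `unitInterval`. -/
noncomputable def gm (s : unitInterval) (y : M × ℝ) : M × ℝ := (y.1, fh s.1 y.2)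

lemma gm_inj (s : unitInterval) : Function.Injective (gm (M := M) s) := by
  intro y z h
  obtain ⟨h1, h2⟩ := Prod.ext_iff.mp h
  exact Prod.ext h1 ((fh_strictMono s.2.1 s.2.2).injective h2)

/-- Apply an injective self-map to a labelled ordered configuration. -/
def cmap {Y : Type} {k : ℕ} (g : Y → Y) (hg : Function.Injective g)
    (p : { v : Fin k → Y // Function.Injective v } × (Fin k → X)) :
    { v : Fin k → Y // Function.Injective v } × (Fin k → X) :=
  (⟨g ∘ p.1.1, hg.comp p.1.2⟩, p.2)

lemma cmap_rel {Y : Type} {k : ℕ} (g : Y → Y) (hg : Function.Injective g)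
    {p q : { v : Fin k → Y // Function.Injective v } × (Fin k → X)}
    (h : ConfigRel Y X k p q) : ConfigRel Y X k (cmap g hg p) (cmap g hg q) := by
  obtain ⟨σ, h1, h2⟩ := h
  refine ⟨σ, ?_, h2⟩
  show (g ∘ p.1.1) ∘ σ = g ∘ q.1.1
  rw [Function.comp_assoc, h1]

lemma configRel_equivalence (Y : Type) (k : ℕ) : Equivalence (ConfigRel Y X k) where
  refl p := ⟨Equiv.refl _, rfl, rfl⟩
  symm := by
    rintro p q ⟨σ, h1, h2⟩
    refine ⟨σ.symm, funext fun i => ?_, funext fun i => ?_⟩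
    · simpa using (congrFun h1 (σ.symm i)).symm
    · simpa using (congrFun h2 (σ.symm i)).symm
  trans := by
    rintro p q r ⟨σ, h1, h2⟩ ⟨τ, h3, h4⟩
    refine ⟨τ.trans σ, funext fun i => ?_, funext fun i => ?_⟩
    · simpa using (congrFun h1 (τ i)).trans (congrFun h3 i)
    · simpa using (congrFun h2 (τ i)).trans (congrFun h4 i)

/-- The homotopy map on the labelled configuration space. -/
noncomputable def lcH (p : LabelledConfig (M × ℝ) X × unitInterval) :
    LabelledConfig (M × ℝ) X :=
  ⟨p.1.1, Quot.map (cmap (gm p.2) (gm_inj p.2)) (fun _ _ => cmap_rel _ _) p.1.2⟩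

lemma continuous_lcH : Continuous (lcH (M := M) (X := X)) := by
  have key : Continuous fun q : Σ k : ℕ,
      Quot (ConfigRel (M × ℝ) X k) × unitInterval => lcH (⟨q.1, q.2.1⟩, q.2.2) := by
    apply continuous_sigma
    intro k
    apply Topology.IsQuotientMap.continuous_lift_prod_left isQuotientMap_quot_mk
    show Continuous fun p : ({ v : Fin k → M × ℝ // Function.Injective v } ×
        (Fin k → X)) × unitInterval =>
      (⟨k, Quot.mk _ (cmap (gm p.2) (gm_inj p.2) p.1)⟩ : LabelledConfig (M × ℝ) X)
    apply continuous_sigmaMk.comp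
    apply continuous_quot_mk.comp
    apply Continuous.prodMk
    · apply Continuous.subtype_mk
      apply continuous_pi
      intro i
      have hv : Continuous fun p : ({ v : Fin k → M × ℝ // Function.Injective v } ×
          (Fin k → X)) × unitInterval => p.1.1.1 i :=
        (continuous_apply i).comp (continuous_subtype_val.comp
          (continuous_fst.comp continuous_fst))
      exact (continuous_fst.comp hv).prodMk
        (fh_continuous.comp ((continuous_subtype_val.comp continuous_snd).prodMk
          (continuous_snd.comp hv)))
    · exact continuous_snd.comp continuous_fst
  have heq : lcH (M := M) (X := X) =
      (fun q : Σ k : ℕ, Quot (ConfigRel (M × ℝ) X k) × unitInterval =>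
        lcH (⟨q.1, q.2.1⟩, q.2.2)) ∘ (Homeomorph.sigmaProdDistrib) := by
    funext p
    rcases p with ⟨⟨k, c⟩, s⟩
    rfl
  rw [heq]
  exact key.comp (Homeomorph.continuous _)

lemma lcH_fst (p : LabelledConfig (M × ℝ) X × unitInterval) : (lcH p).1 = p.1.1 := rfl

lemma lcH_zero (c : LabelledConfig (M × ℝ) X) : lcH (c, 0) = c := by
  rcases c with ⟨k, q⟩
  induction q using Quot.ind with
  | _ p =>
    have hp : cmap (gm (0 : unitInterval)) (gm_inj 0) p = p := by
      refine Prod.ext (Subtype.ext (funext fun i => ?_)) rfl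
      show gm 0 (p.1.1 i) = p.1.1 i
      exact Prod.ext rfl (fh_zero _)
    exact congrArg
      (fun z => (⟨k, Quot.mk (ConfigRel (M × ℝ) X k) z⟩ : LabelledConfig (M × ℝ) X)) hp

/-- The key membership statement: coordinates of points of `lcH (c, u)` lie in `Ioo 0 r`
provided coordinates of points of `c` are mapped into `Ioo 0 r` by `fh u`. -/
lemma lcH_mem {k : ℕ} (w : Quot (ConfigRel (M × ℝ) X k)) (u : unitInterval) (r : ℝ)
    (hb : ∀ a : { v : Fin k → M × ℝ // Function.Injective v } × (Fin k → X),
      Quot.mk _ a = w → ∀ j, fh u.1 ((a.1.1 j).2) ∈ Set.Ioo (0 : ℝ) r) :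
    ∀ q : { v : Fin k → M × ℝ // Function.Injective v } × (Fin k → X),
      Quot.mk _ q = Quot.map (cmap (gm u) (gm_inj u)) (fun _ _ => cmap_rel _ _) w →
        ∀ i, ((q.1.1 i).2) ∈ Set.Ioo (0 : ℝ) r := by
  obtain ⟨a, rfl⟩ := Quot.exists_rep w
  intro q hq i
  have hrel : ConfigRel (M × ℝ) X k q (cmap (gm u) (gm_inj u) a) :=
    ((configRel_equivalence _ _).eqvGen_iff).mp (Quot.eq.mp hq)
  obtain ⟨σ, h1, h2⟩ := hrel
  have hcoord : q.1.1 i = gm u (a.1.1 (σ.symm i)) := by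
    have := congrFun h1 (σ.symm i)
    simpa [cmap] using this
  rw [hcoord]
  exact hb a rfl (σ.symm i)

end SegalAux

open SegalAux in
theorem cprime_forget_homotopyEquiv (M X : Type) [TopologicalSpace M] [TopologicalSpace X] :
    ∃ h : ContinuousMap.HomotopyEquiv (CPrime M X) (LabelledConfig (M × ℝ) X),
      ∀ p : CPrime M X, h.toFun p = p.val.1 := by
  classical
  -- the forgetful map
  set fwd : C(CPrime M X, LabelledConfig (M × ℝ) X) :=
    ⟨fun p => p.val.1, continuous_fst.comp continuous_subtype_val⟩ with hfwd
  -- the inverse map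
  have inv_mem : ∀ c : LabelledConfig (M × ℝ) X,
      (0 : ℝ) ≤ 1 ∧ ∀ q : { v : Fin (lcH (c, 1)).1 → M × ℝ // Function.Injective v } ×
        (Fin (lcH (c, 1)).1 → X),
        Quot.mk (ConfigRel (M × ℝ) X (lcH (c, 1)).1) q = (lcH (c, 1)).2 →
          ∀ i, ((q.1 : Fin (lcH (c, 1)).1 → M × ℝ) i).2 ∈ Set.Ioo (0 : ℝ) 1 := by
    intro c
    refine ⟨zero_le_one, ?_⟩
    exact lcH_mem c.2 1 1 (fun a _ j => by
      rw [show ((1 : unitInterval) : ℝ) = 1 from rfl, fh_one]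
      exact phi_mem _)
  set inv : C(LabelledConfig (M × ℝ) X, CPrime M X) :=
    ⟨fun c => ⟨(lcH (c, 1), 1), inv_mem c⟩,
      by
        apply Continuous.subtype_mk
        exact (continuous_lcH.comp (continuous_id.prodMk continuous_const)).prodMk
          continuous_const⟩ with hinv
  -- homotopy on the labelled configuration space: right inverse
  have right_inv : (fwd.comp inv).Homotopic (ContinuousMap.id _) := by
    refine ⟨⟨⟨fun p => lcH (p.2, unitInterval.symm p.1), ?_⟩, ?_, ?_⟩⟩
    · exact continuous_lcH.comp (continuous_snd.prodMk
        (unitInterval.continuous_symm.comp continuous_fst))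
    · intro c
      simp only [unitInterval.symm_zero]
      rfl
    · intro c
      simp only [unitInterval.symm_one]
      exact lcH_zero c
  -- homotopy on CPrime: left inverse
  have left_mem : ∀ (p : CPrime M X) (s : unitInterval),
      (0 : ℝ) ≤ (1 - (s : ℝ)) * p.val.2 + (s : ℝ) ∧
      ∀ q : { v : Fin (lcH (p.val.1, s)).1 → M × ℝ // Function.Injective v } ×
        (Fin (lcH (p.val.1, s)).1 → X),
        Quot.mk (ConfigRel (M × ℝ) X (lcH (p.val.1, s)).1) q = (lcH (p.val.1, s)).2 →
          ∀ i, ((q.1 : Fin (lcH (p.val.1, s)).1 → M × ℝ) i).2 ∈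
            Set.Ioo (0 : ℝ) ((1 - (s : ℝ)) * p.val.2 + (s : ℝ)) := by
    intro p s
    obtain ⟨ht, hp⟩ := p.2
    constructor
    · nlinarith [s.2.1, s.2.2]
    · exact lcH_mem p.val.1.2 s _ (fun a ha j => fh_mem s.2.1 s.2.2 (hp a ha j))
  have left_inv : (inv.comp fwd).Homotopic (ContinuousMap.id _) := by
    refine ⟨⟨⟨fun q => ⟨(lcH (q.2.val.1, unitInterval.symm q.1),
        (1 - (unitInterval.symm q.1 : ℝ)) * q.2.val.2 + (unitInterval.symm q.1 : ℝ)),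
        left_mem q.2 (unitInterval.symm q.1)⟩, ?_⟩, ?_, ?_⟩⟩
    · apply Continuous.subtype_mk
      have hs : Continuous fun q : unitInterval × CPrime M X =>
          ((unitInterval.symm q.1 : ℝ)) :=
        continuous_subtype_val.comp (unitInterval.continuous_symm.comp continuous_fst)
      have hc : Continuous fun q : unitInterval × CPrime M X => q.2.val.1 :=
        continuous_fst.comp (continuous_subtype_val.comp continuous_snd)
      have htt : Continuous fun q : unitInterval × CPrime M X => q.2.val.2 :=
        continuous_snd.comp (continuous_subtype_val.comp continuous_snd)
      exact (continuous_lcH.comp (hc.prodMk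
        (unitInterval.continuous_symm.comp continuous_fst))).prodMk
        (((continuous_const.sub hs).mul htt).add hs)
    · intro p
      apply Subtype.ext
      simp only [unitInterval.symm_zero]
      show (lcH (p.val.1, 1), (1 - ((1 : unitInterval) : ℝ)) * p.val.2 +
        ((1 : unitInterval) : ℝ)) = (lcH (p.val.1, 1), 1)
      rw [show ((1 : unitInterval) : ℝ) = 1 from rfl]
      ring_nf
    · intro p
      apply Subtype.ext
      simp only [unitInterval.symm_one]
      show (lcH (p.val.1, 0), (1 - ((0 : unitInterval) : ℝ)) * p.val.2 +
        ((0 : unitInterval) : ℝ)) = p.val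
      rw [show ((0 : unitInterval) : ℝ) = 0 from rfl, lcH_zero]
      simp
  exact ⟨⟨fwd, inv, left_inv, right_inv⟩, fun p => rfl⟩
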